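/- Let d ≥ 1 and let B⋆ and B be d×d real matrices with zero diagonal, each supported on a DAG. Let Ω⋆ be a diagonal d×d matrix with strictly positive diagonal entries, and set Θ⋆ = (I − B⋆) (Ω⋆)⁻¹ (I − B⋆)ᵀ. If supp(B) ⊆ supp(Θ⋆) and (I − B) (Ω⋆)⁻¹ (I − B)ᵀ = Θ⋆, then B = B⋆. -/

import Mathlib

open Matrix

def SupportedOnDag {d : ℕ} (B : Matrix (Fin d) (Fin d) ℝ) : Prop :=
  ∃ σ : Equiv.Perm (Fin d), ∀ i j : Fin d, B (σ i) (σ j) ≠ 0 → j < i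

lemma aux_key : ∀ (d : ℕ) (B C : Matrix (Fin d) (Fin d) ℝ) (u : Fin d → ℝ)
    (rB rC : Fin d → ℕ),
    (∀ i, 0 < u i) →
    (∀ i j, B i j ≠ 0 → rB j < rB i) →
    (∀ i j, C i j ≠ 0 → rC j < rC i) →
    (∀ i j, ∑ k, ((if i = k then (1:ℝ) else 0) - B i k) * u k *
        ((if j = k then (1:ℝ) else 0) - B j k)
      = ∑ k, ((if i = k then (1:ℝ) else 0) - C i k) * u k *
        ((if j = k then (1:ℝ) else 0) - C j k)) →
    B = C := by
  intro d
  induction d with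
  | zero =>
    intro B C _ _ _ _ _ _ _
    ext i j
    exact i.elim0
  | succ n ih =>
    intro B C u rB rC hu hrB hrC E
    obtain ⟨i₀, -, hmin⟩ := Finset.exists_min_image Finset.univ rB ⟨0, Finset.mem_univ 0⟩
    have hrowB : ∀ j, B i₀ j = 0 := by
      intro j; by_contra h
      exact absurd (hmin j (Finset.mem_univ j)) (not_le.2 (hrB i₀ j h))
    have hCd : ∀ i, C i i = 0 := fun i => by
      by_contra h; exact lt_irrefl _ (hrC i i h)
    -- Step A : row i₀ of C is zero
    have hrowC : ∀ j, C i₀ j = 0 := by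
      have h := (E i₀ i₀).symm
      have hL : ∑ k, ((if i₀ = k then (1:ℝ) else 0) - B i₀ k) * u k *
          ((if i₀ = k then (1:ℝ) else 0) - B i₀ k) = u i₀ := by
        simp [hrowB, ite_mul, mul_ite]
      rw [hL] at h
      have hsplit := Finset.sum_erase_add Finset.univ
        (fun k => ((if i₀ = k then (1:ℝ) else 0) - C i₀ k) * u k *
          ((if i₀ = k then (1:ℝ) else 0) - C i₀ k)) (Finset.mem_univ i₀)
      rw [h] at hsplit
      have hfix : (fun k => ((if i₀ = k then (1:ℝ) else 0) - C i₀ k) * u k *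
          ((if i₀ = k then (1:ℝ) else 0) - C i₀ k)) i₀ = u i₀ := by
        simp [hCd]
      have hfix' : ((if i₀ = i₀ then (1:ℝ) else 0) - C i₀ i₀) * u i₀ * ((if i₀ = i₀ then (1:ℝ) else 0) - C i₀ i₀) = u i₀ := hfix
      rw [hfix'] at hsplit
      have h0 : ∑ k ∈ Finset.univ.erase i₀,
          ((if i₀ = k then (1:ℝ) else 0) - C i₀ k) * u k *
          ((if i₀ = k then (1:ℝ) else 0) - C i₀ k) = 0 := by linarith
      have h0' : ∑ k ∈ Finset.univ.erase i₀, C i₀ k * C i₀ k * u k = 0 := by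
        rw [← h0]
        apply Finset.sum_congr rfl
        intro k hk
        have hne : i₀ ≠ k := (Finset.ne_of_mem_erase hk).symm
        rw [if_neg hne]
        ring
      have hnn : ∀ k ∈ Finset.univ.erase i₀, 0 ≤ C i₀ k * C i₀ k * u k :=
        fun k _ => mul_nonneg (mul_self_nonneg _) (hu k).le
      have hz := (Finset.sum_eq_zero_iff_of_nonneg hnn).1 h0'
      intro j
      rcases eq_or_ne j i₀ with h | hne
      · rw [h]; exact hCd i₀
      · have hj := hz j (Finset.mem_erase.2 ⟨hne, Finset.mem_univ j⟩)
        by_contra hc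
        have h1 : 0 < C i₀ j * C i₀ j := mul_self_pos.2 hc
        have h2 : 0 < C i₀ j * C i₀ j * u j := mul_pos h1 (hu j)
        rw [hj] at h2
        exact lt_irrefl _ h2
    -- Step B : columns i₀ agree
    have hcol : ∀ j, B j i₀ = C j i₀ := by
      intro j
      have h := E j i₀
      have hL : ∑ k, ((if j = k then (1:ℝ) else 0) - B j k) * u k *
          ((if i₀ = k then (1:ℝ) else 0) - B i₀ k)
          = ((if j = i₀ then (1:ℝ) else 0) - B j i₀) * u i₀ := by
        simp [hrowB, mul_ite]
      have hR : ∑ k, ((if j = k then (1:ℝ) else 0) - C j k) * u k *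
          ((if i₀ = k then (1:ℝ) else 0) - C i₀ k)
          = ((if j = i₀ then (1:ℝ) else 0) - C j i₀) * u i₀ := by
        simp [hrowC, mul_ite]
      rw [hL, hR] at h
      have := mul_right_cancel₀ (hu i₀).ne' h
      linarith
    -- Step C : restricted system and induction
    set e : Fin n → Fin (n + 1) := i₀.succAbove with he
    have hB' := ih (Matrix.of fun i j => B (e i) (e j)) (Matrix.of fun i j => C (e i) (e j))
      (fun k => u (e k)) (fun k => rB (e k)) (fun k => rC (e k))
      (fun k => hu (e k))
      (fun i j h => hrB (e i) (e j) h)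
      (fun i j h => hrC (e i) (e j) h)
      ?_
    · -- Step D : conclude
      ext i j
      rcases eq_or_ne i i₀ with rfl | hi
      · rw [hrowB j, hrowC j]
      rcases eq_or_ne j i₀ with rfl | hj
      · exact hcol i
      obtain ⟨i', rfl⟩ := Fin.exists_succAbove_eq hi
      obtain ⟨j', rfl⟩ := Fin.exists_succAbove_eq hj
      exact congrFun (congrFun hB' i') j'
    · intro i j
      have h := E (e i) (e j)
      rw [Fin.sum_univ_succAbove (fun k => ((if e i = k then (1:ℝ) else 0) - B (e i) k) * u k *
            ((if e j = k then (1:ℝ) else 0) - B (e j) k)) i₀,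
          Fin.sum_univ_succAbove (fun k => ((if e i = k then (1:ℝ) else 0) - C (e i) k) * u k *
            ((if e j = k then (1:ℝ) else 0) - C (e j) k)) i₀] at h
      have hne1 : e i ≠ i₀ := Fin.succAbove_ne i₀ i
      have hne2 : e j ≠ i₀ := Fin.succAbove_ne i₀ j
      rw [if_neg hne1, if_neg hne2, hcol (e i), hcol (e j)] at h
      have h' := add_left_cancel h
      calc ∑ k, ((if i = k then (1:ℝ) else 0) - Matrix.of (fun i j => B (e i) (e j)) i k) * u (e k) *
            ((if j = k then (1:ℝ) else 0) - Matrix.of (fun i j => B (e i) (e j)) j k)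
          = ∑ k, ((if e i = e k then (1:ℝ) else 0) - B (e i) (e k)) * u (e k) *
            ((if e j = e k then (1:ℝ) else 0) - B (e j) (e k)) := by
            apply Finset.sum_congr rfl
            intro k _
            simp only [he, Fin.succAbove_right_inj, Matrix.of_apply]
        _ = ∑ k, ((if e i = e k then (1:ℝ) else 0) - C (e i) (e k)) * u (e k) *
            ((if e j = e k then (1:ℝ) else 0) - C (e j) (e k)) := h'
        _ = _ := by
            apply Finset.sum_congr rfl
            intro k _
            simp only [he, Fin.succAbove_right_inj, Matrix.of_apply]

theorem oicid_stmt_5 (d : ℕ) (hd : 1 ≤ d)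
    (Bstar B : Matrix (Fin d) (Fin d) ℝ)
    (hBstar0 : ∀ i, Bstar i i = 0) (hB0 : ∀ i, B i i = 0)
    (hBstarDag : SupportedOnDag Bstar) (hBDag : SupportedOnDag B)
    (ω : Fin d → ℝ) (hω : ∀ i, 0 < ω i)
    (Θ : Matrix (Fin d) (Fin d) ℝ)
    (hΘ : Θ = (1 - Bstar) * (Matrix.diagonal ω)⁻¹ * (1 - Bstar)ᵀ)
    (hsupp : ∀ i j : Fin d, B i j ≠ 0 → Θ i j ≠ 0)
    (heq : (1 - B) * (Matrix.diagonal ω)⁻¹ * (1 - B)ᵀ = Θ) :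
    B = Bstar := by
  have hinv : (Matrix.diagonal ω)⁻¹ = Matrix.diagonal (fun k => (ω k)⁻¹) := by
    apply Matrix.inv_eq_right_inv
    have hfun : (fun i => ω i * (ω i)⁻¹) = fun _ => (1:ℝ) :=
      funext fun i => mul_inv_cancel₀ (hω i).ne'
    rw [Matrix.diagonal_mul_diagonal, hfun, Matrix.diagonal_one]
  have hentry : ∀ (A : Matrix (Fin d) (Fin d) ℝ) (i j : Fin d),
      ((1 - A) * (Matrix.diagonal ω)⁻¹ * (1 - A)ᵀ : Matrix (Fin d) (Fin d) ℝ) i j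
      = ∑ k, ((if i = k then (1:ℝ) else 0) - A i k) * (ω k)⁻¹ *
          ((if j = k then (1:ℝ) else 0) - A j k) := by
    intro A i j
    rw [hinv, Matrix.mul_apply]
    apply Finset.sum_congr rfl
    intro k _
    rw [Matrix.mul_diagonal, Matrix.transpose_apply, Matrix.sub_apply, Matrix.sub_apply,
      Matrix.one_apply, Matrix.one_apply]
  obtain ⟨σ, hσ⟩ := hBDag
  obtain ⟨τ, hτ⟩ := hBstarDag
  apply aux_key d B Bstar (fun k => (ω k)⁻¹)
    (fun i => (σ.symm i : ℕ)) (fun i => (τ.symm i : ℕ))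
    (fun i => inv_pos.2 (hω i))
  · intro i j h
    have := hσ (σ.symm i) (σ.symm j) (by simpa using h)
    exact this
  · intro i j h
    have := hτ (τ.symm i) (τ.symm j) (by simpa using h)
    exact this
  · intro i j
    have h : ((1 - B) * (Matrix.diagonal ω)⁻¹ * (1 - B)ᵀ : Matrix (Fin d) (Fin d) ℝ) i j
        = ((1 - Bstar) * (Matrix.diagonal ω)⁻¹ * (1 - Bstar)ᵀ : Matrix (Fin d) (Fin d) ℝ) i j := by
      rw [heq, hΘ]
    rw [hentry, hentry] at h
    exact h
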